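/- For every set F ⊆ ℝ^d, the packing dimension, generalized upper box dimension, and Assouad dimension satisfy dim_P F ≤ \overline{dim}_GB F ≤ dim_A F. -/

import Mathlib

open Filter Metric Set Topology Bornology ENNReal

noncomputable section

variable {X : Type*} [PseudoMetricSpace X]

/-- `coveringNumber r E` is the smallest number of closed balls of radius `r`
needed to cover `E` (with value `⊤` if no finite cover exists). -/
def coveringNumber (r : ℝ) (E : Set X) : ℕ∞ :=
  sInf {n : ℕ∞ | ∃ t : Finset X, (E ⊆ ⋃ x ∈ t, closedBall x r) ∧ (t.card : ℕ∞) = n}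

/-- The Assouad spectrum `dim_A^θ F`. -/
def assouadSpectrum (θ : ℝ) (F : Set X) : ℝ :=
  sInf {s : ℝ | 0 ≤ s ∧ ∃ C > (0 : ℝ), ∀ R : ℝ, 0 < R → R < 1 → ∀ x ∈ F,
    (coveringNumber (R ^ (1 / θ)) (closedBall x R ∩ F) : ℝ≥0∞)
      ≤ ENNReal.ofReal (C * (R / R ^ (1 / θ)) ^ s)}

/-- The upper spectrum `\overline{dim}_A^θ F`. -/
def upperSpectrum (θ : ℝ) (F : Set X) : ℝ :=
  sInf {s : ℝ | 0 ≤ s ∧ ∃ C > (0 : ℝ), ∀ r R : ℝ, 0 < r → r ≤ R ^ (1 / θ) →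
    R ^ (1 / θ) < R → R < 1 → 0 < R → ∀ x ∈ F,
    (coveringNumber r (closedBall x R ∩ F) : ℝ≥0∞) ≤ ENNReal.ofReal (C * (R / r) ^ s)}

/-- The generalized upper box dimension `\overline{dim}_{GB} F := limsup_{θ → 0⁺} dim_A^θ F`. -/
def genUpperBoxDim (F : Set X) : ℝ :=
  limsup (fun θ : ℝ => assouadSpectrum θ F) (𝓝[>] (0 : ℝ))

/-- The quasi-Assouad dimension `dim_{qA} F := lim_{θ → 1⁻} \overline{dim}_A^θ F`
(the limit exists by monotonicity, hence equals the limsup). -/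
def quasiAssouadDim (F : Set X) : ℝ :=
  limsup (fun θ : ℝ => upperSpectrum θ F) (𝓝[<] (1 : ℝ))

/-- The upper box dimension `\overline{dim}_B F := limsup_{δ → 0⁺} log N_δ(F) / (- log δ)`. -/
def upperBoxDim (F : Set X) : ℝ :=
  limsup (fun δ : ℝ => Real.log ((coveringNumber δ F).toNat : ℝ) / (- Real.log δ))
    (𝓝[>] (0 : ℝ))

/-- The Assouad dimension `dim_A F`. -/
def assouadDim (F : Set X) : ℝ :=
  sInf {s : ℝ | 0 ≤ s ∧ ∃ C > (0 : ℝ), ∃ ρ > (0 : ℝ), ∀ r R : ℝ, 0 < r → r < R → R < ρ →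
    ∀ x ∈ F, (coveringNumber r (closedBall x R ∩ F) : ℝ≥0∞) ≤ ENNReal.ofReal (C * (R / r) ^ s)}

/-- The packing pre-measure at scale `δ`: the supremum of `∑ |B_i|^s` over at most countable
collections of disjoint closed balls of radii at most `δ` (and positive) with centres in `F`,
where `|B_i| = 2 r_i` is the diameter. -/
def packingPre (s δ : ℝ) (F : Set X) : ℝ≥0∞ :=
  ⨆ (D : Set (X × ℝ)) (_ : D.Countable)
    (_ : ∀ p ∈ D, p.1 ∈ F ∧ 0 < p.2 ∧ p.2 ≤ δ)
    (_ : D.Pairwise fun p q => Disjoint (closedBall p.1 p.2) (closedBall q.1 q.2)),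
    ∑' p : D, ENNReal.ofReal ((2 * (p : X × ℝ).2) ^ s)

/-- `𝒫₀^s(F) := lim_{δ → 0} 𝒫_δ^s(F)`; the limit exists by monotonicity and equals the inf. -/
def packingPre₀ (s : ℝ) (F : Set X) : ℝ≥0∞ :=
  ⨅ (δ : ℝ) (_ : 0 < δ), packingPre s δ F

/-- The packing (outer) measure `𝒫^s(F)`. -/
def packingMeasure (s : ℝ) (F : Set X) : ℝ≥0∞ :=
  ⨅ (G : ℕ → Set X) (_ : F ⊆ ⋃ i, G i), ∑' i, packingPre₀ s (G i)

/-- The packing dimension `dim_P F = inf {s ≥ 0 : 𝒫^s(F) = 0}`. -/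
def packingDim (F : Set X) : ℝ :=
  sInf {s : ℝ | 0 ≤ s ∧ packingMeasure s F = 0}



section CoverAPI
lemma coveringNumber_le_card {r : ℝ} {E : Set X} {t : Finset X}
    (h : E ⊆ ⋃ x ∈ t, closedBall x r) : coveringNumber r E ≤ t.card :=
  sInf_le ⟨t, h, rfl⟩

lemma coveringNumber_mono {r : ℝ} {E E' : Set X} (h : E' ⊆ E) :
    coveringNumber r E' ≤ coveringNumber r E := by
  apply le_sInf
  rintro n ⟨t, ht, rfl⟩
  exact coveringNumber_le_card (h.trans ht)

lemma exists_cover_of_coveringNumber_ne_top {r : ℝ} {E : Set X}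
    (h : coveringNumber r E ≠ ⊤) :
    ∃ t : Finset X, (E ⊆ ⋃ x ∈ t, closedBall x r) ∧ (t.card : ℕ∞) = coveringNumber r E := by
  have hne : {n : ℕ∞ | ∃ t : Finset X, (E ⊆ ⋃ x ∈ t, closedBall x r) ∧ (t.card : ℕ∞) = n}.Nonempty := by
    by_contra hc
    rw [Set.not_nonempty_iff_eq_empty] at hc
    apply h
    simp [_root_.coveringNumber, hc]
  exact csInf_mem hne

/-- casting: a finset cover with real card bound gives ENNReal covering bound. -/
lemma coveringNumber_le_ofReal {r : ℝ} {E : Set X} {t : Finset X} {B : ℝ}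
    (h : E ⊆ ⋃ x ∈ t, closedBall x r) (hB : (t.card : ℝ) ≤ B) :
    (coveringNumber r E : ℝ≥0∞) ≤ ENNReal.ofReal B := by
  have h1 : (coveringNumber r E : ℝ≥0∞) ≤ ((t.card : ℕ∞) : ℝ≥0∞) := by
    exact_mod_cast coveringNumber_le_card h
  refine h1.trans ?_
  rw [ENat.toENNReal_coe]
  calc (t.card : ℝ≥0∞) = ENNReal.ofReal (t.card : ℝ) := by
        rw [ENNReal.ofReal_natCast]
    _ ≤ ENNReal.ofReal B := ENNReal.ofReal_le_ofReal hB

/-- extraction: an ENNReal covering bound gives a finset cover with real card bound. -/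
lemma exists_cover_of_le_ofReal {r : ℝ} {E : Set X} {B : ℝ} (hB : 0 ≤ B)
    (h : (coveringNumber r E : ℝ≥0∞) ≤ ENNReal.ofReal B) :
    ∃ t : Finset X, (E ⊆ ⋃ x ∈ t, closedBall x r) ∧ (t.card : ℝ) ≤ B := by
  have hne : coveringNumber r E ≠ ⊤ := by
    intro hc
    rw [hc] at h
    simp at h
  obtain ⟨t, ht, hcard⟩ := exists_cover_of_coveringNumber_ne_top hne
  refine ⟨t, ht, ?_⟩
  have h2 : ((t.card : ℕ∞) : ℝ≥0∞) ≤ ENNReal.ofReal B := by rw [hcard]; exact h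
  rw [ENat.toENNReal_coe, ← ENNReal.ofReal_natCast] at h2
  exact_mod_cast (ENNReal.ofReal_le_ofReal_iff hB).mp h2


end CoverAPI

section Euclid
variable {V : Type*} [NormedAddCommGroup V] [NormedSpace ℝ V] [ProperSpace V]
lemma base_quarter_cover :
    ∃ t₀ : Finset V, closedBall (0 : V) 1 ⊆ ⋃ y ∈ t₀, closedBall y (1/4) := by
  obtain ⟨s, _, hfin, hcov⟩ :=
    (isCompact_closedBall (0 : V) 1).finite_cover_balls (e := 1/4) (by norm_num)
  refine ⟨hfin.toFinset, fun z hz => ?_⟩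
  obtain ⟨y, hy, hzy⟩ := Set.mem_iUnion₂.mp (hcov hz)
  exact Set.mem_iUnion₂.mpr ⟨y, hfin.mem_toFinset.mpr hy, ball_subset_closedBall hzy⟩

lemma scaled_quarter_cover (t₀ : Finset V)
    (h₀ : closedBall (0 : V) 1 ⊆ ⋃ y ∈ t₀, closedBall y (1/4))
    (x : V) {ρ : ℝ} (hρ : 0 < ρ) :
    ∃ t : Finset V, t.card ≤ t₀.card ∧ closedBall x ρ ⊆ ⋃ y ∈ t, closedBall y (ρ/4) := by
  classical
  refine ⟨t₀.image (fun y => x + ρ • y), Finset.card_image_le, fun z hz => ?_⟩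
  set w : V := ρ⁻¹ • (z - x) with hw
  have hwball : w ∈ closedBall (0 : V) 1 := by
    rw [mem_closedBall, dist_zero_right, hw, norm_smul, norm_inv, Real.norm_of_nonneg hρ.le]
    rw [mem_closedBall, dist_eq_norm] at hz
    rw [inv_mul_le_iff₀ hρ, mul_one]
    exact hz
  obtain ⟨y, hy, hwy⟩ := Set.mem_iUnion₂.mp (h₀ hwball)
  refine Set.mem_iUnion₂.mpr ⟨x + ρ • y, Finset.mem_image_of_mem _ hy, ?_⟩
  have hz' : z = x + ρ • w := by
    rw [hw, smul_inv_smul₀ hρ.ne']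
    abel
  rw [mem_closedBall, hz', dist_eq_norm]
  have : x + ρ • w - (x + ρ • y) = ρ • (w - y) := by
    rw [smul_sub]; abel
  rw [this, norm_smul, Real.norm_of_nonneg hρ.le]
  rw [mem_closedBall, dist_eq_norm] at hwy
  calc ρ * ‖w - y‖ ≤ ρ * (1/4) := by nlinarith [hwy]
    _ = ρ / 4 := by ring

lemma iter_quarter_cover (t₀ : Finset V)
    (h₀ : closedBall (0 : V) 1 ⊆ ⋃ y ∈ t₀, closedBall y (1/4)) :
    ∀ (n : ℕ) (x : V) (ρ : ℝ), 0 < ρ →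
    ∃ t : Finset V, t.card ≤ t₀.card ^ n ∧
      closedBall x ρ ⊆ ⋃ y ∈ t, closedBall y (ρ / 4 ^ n) := by
  classical
  intro n
  induction n with
  | zero =>
    intro x ρ hρ
    exact ⟨{x}, by simp, by simp⟩
  | succ n ih =>
    intro x ρ hρ
    obtain ⟨t, htc, htcov⟩ := ih x ρ hρ
    have hρ4 : 0 < ρ / 4 ^ n := by positivity
    choose f hfc hfcov using fun y : V => scaled_quarter_cover t₀ h₀ y hρ4
    refine ⟨t.biUnion f, ?_, ?_⟩
    · calc (t.biUnion f).card ≤ ∑ y ∈ t, (f y).card := Finset.card_biUnion_le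
        _ ≤ ∑ _y ∈ t, t₀.card := Finset.sum_le_sum (fun y _ => hfc y)
        _ = t.card * t₀.card := by rw [Finset.sum_const, smul_eq_mul]
        _ ≤ t₀.card ^ n * t₀.card := Nat.mul_le_mul_right _ htc
        _ = t₀.card ^ (n+1) := by ring
    · intro z hz
      obtain ⟨y, hy, hzy⟩ := Set.mem_iUnion₂.mp (htcov hz)
      obtain ⟨w, hw, hzw⟩ := Set.mem_iUnion₂.mp (hfcov y hzy)
      have : ρ / 4 ^ n / 4 = ρ / 4 ^ (n+1) := by ring
      rw [this] at hzw
      exact Set.mem_iUnion₂.mpr ⟨w, Finset.mem_biUnion.mpr ⟨y, hy, hw⟩, hzw⟩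

/-- The key Euclidean covering bound: balls of radius `R` are covered by
`C * max (R/r) 1 ^ D` balls of radius `r`. -/
lemma exists_cover_const :
    ∃ C D : ℝ, 1 ≤ C ∧ 0 ≤ D ∧ ∀ (x : V) (r R : ℝ), 0 < r → 0 < R →
      ∃ t : Finset V, (closedBall x R ⊆ ⋃ y ∈ t, closedBall y r) ∧
        (t.card : ℝ) ≤ C * (max (R/r) 1) ^ D := by
  obtain ⟨t₀, h₀⟩ := (base_quarter_cover (V := V))
  set K : ℕ := max t₀.card 1 with hK
  have hK1 : (1 : ℝ) ≤ K := by exact_mod_cast Nat.le_max_right _ 1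
  have hKpos : (0:ℝ) < K := lt_of_lt_of_le one_pos hK1
  refine ⟨K, Real.log K / Real.log 4, hK1, by positivity, ?_⟩
  intro x r R hr hR
  rcases le_or_gt R r with hRr | hRr
  · -- one ball suffices
    refine ⟨{x}, by simpa using closedBall_subset_closedBall hRr, ?_⟩
    simp only [Finset.card_singleton, Nat.cast_one]
    have h1 : (1:ℝ) ≤ (max (R/r) 1) ^ (Real.log K / Real.log 4) :=
      Real.one_le_rpow (le_max_right _ _) (by positivity)
    nlinarith
  · -- choose n least with R ≤ r * 4^n
    have hex : ∃ n : ℕ, R ≤ r * 4 ^ n := by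
      obtain ⟨n, hn⟩ := pow_unbounded_of_one_lt (R / r) (by norm_num : (1:ℝ) < 4)
      exact ⟨n, by rw [div_lt_iff₀ hr] at hn; linarith⟩
    set n := Nat.find hex with hn
    have hnspec : R ≤ r * 4 ^ n := Nat.find_spec hex
    have hn1 : 1 ≤ n := by
      rcases Nat.eq_zero_or_pos n with h0 | h1
      · exfalso; have := hnspec; rw [h0] at this; simp at this; linarith
      · exact h1
    have hmin : ¬ (R ≤ r * 4 ^ (n-1)) := Nat.find_min hex (by omega)
    push_neg at hmin
    obtain ⟨t, htc, htcov⟩ := iter_quarter_cover t₀ h₀ n x R hR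
    have hrad : R / 4 ^ n ≤ r := by
      rw [div_le_iff₀ (by positivity)]
      linarith [hnspec]
    refine ⟨t, fun z hz => ?_, ?_⟩
    · obtain ⟨y, hy, hzy⟩ := Set.mem_iUnion₂.mp (htcov hz)
      exact Set.mem_iUnion₂.mpr ⟨y, hy, closedBall_subset_closedBall hrad hzy⟩
    · -- card bound
      have hcard : (t.card : ℝ) ≤ (K:ℝ) ^ n := by
        calc (t.card : ℝ) ≤ (t₀.card : ℝ) ^ n := by exact_mod_cast htc
          _ ≤ (K:ℝ) ^ n := by
              apply pow_le_pow_left₀ (by positivity)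
              exact_mod_cast Nat.le_max_left _ 1
      refine hcard.trans ?_
      -- K^n ≤ K * (R/r)^(log K / log 4)
      have hmax : max (R/r) 1 = R/r := max_eq_left (by
        rw [le_div_iff₀ hr]; linarith)
      rw [hmax]
      have hlog4 : (0:ℝ) < Real.log 4 := Real.log_pos (by norm_num)
      have hlogK : 0 ≤ Real.log K := Real.log_nonneg hK1
      have hn1' : ((n:ℝ) - 1) * Real.log 4 < Real.log (R/r) := by
        have h41 : r * 4 ^ (n-1) < R := hmin
        have : (4:ℝ) ^ (n-1) < R / r := by rw [lt_div_iff₀ hr]; linarith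
        have hlt := Real.log_lt_log (by positivity) this
        rw [Real.log_pow] at hlt
        have hcast : ((n - 1 : ℕ) : ℝ) = (n:ℝ) - 1 := by
          have := hn1; push_cast [Nat.cast_sub this]; ring
        rw [hcast] at hlt
        linarith
      have hRr1 : 1 < R / r := by rw [lt_div_iff₀ hr]; linarith
      have key : ((n:ℝ) - 1) * Real.log K ≤ Real.log (R/r) / Real.log 4 * Real.log K := by
        apply mul_le_mul_of_nonneg_right _ hlogK
        rw [le_div_iff₀ hlog4] at *
        nlinarith
      calc (K:ℝ) ^ n = (K:ℝ) * (K:ℝ) ^ ((n:ℝ) - 1) := by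
            rw [← Real.rpow_natCast (K:ℝ) n]
            have h2 : (K:ℝ) ^ ((1:ℝ) + ((n:ℝ) - 1)) = (K:ℝ) * (K:ℝ) ^ ((n:ℝ) - 1) := by
              rw [Real.rpow_add hKpos, Real.rpow_one]
            rw [← h2]
            ring_nf
        _ ≤ (K:ℝ) * (R/r) ^ (Real.log K / Real.log 4) := by
            apply mul_le_mul_of_nonneg_left _ (le_of_lt hKpos)
            rw [Real.rpow_def_of_pos hKpos, Real.rpow_def_of_pos (by positivity : (0:ℝ) < R/r)]
            apply Real.exp_le_exp.mpr
            calc Real.log (K:ℝ) * ((n:ℝ) - 1) = ((n:ℝ) - 1) * Real.log K := by ring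
              _ ≤ Real.log (R/r) / Real.log 4 * Real.log K := key
              _ = Real.log (R/r) * (Real.log K / Real.log 4) := by ring
end Euclid

section Comp
variable {X : Type*} [PseudoMetricSpace X]

lemma cover_inter_comp {T F : Set X} {u : Finset X} {ρ' r m : ℝ} (hm : 0 ≤ m)
    (hu : T ⊆ ⋃ y ∈ u, closedBall y ρ')
    (hF : ∀ z ∈ F, ∃ t : Finset X, (closedBall z (2*ρ') ∩ F ⊆ ⋃ w ∈ t, closedBall w r) ∧
      (t.card : ℝ) ≤ m) :
    ∃ t : Finset X, (T ∩ F ⊆ ⋃ w ∈ t, closedBall w r) ∧ (t.card : ℝ) ≤ u.card * m := by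
  classical
  have key : ∀ y : X, ∃ t : Finset X,
      (closedBall y ρ' ∩ F ⊆ ⋃ w ∈ t, closedBall w r) ∧ (t.card : ℝ) ≤ m := by
    intro y
    by_cases hne : (closedBall y ρ' ∩ F).Nonempty
    · obtain ⟨z, hz1, hz2⟩ := hne
      obtain ⟨t, ht, htc⟩ := hF z hz2
      refine ⟨t, fun v hv => ht ⟨?_, hv.2⟩, htc⟩
      rw [mem_closedBall] at *
      calc dist v z ≤ dist v y + dist y z := dist_triangle _ _ _
        _ ≤ ρ' + ρ' := add_le_add hv.1 (by rw [dist_comm]; exact hz1)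
        _ = 2 * ρ' := by ring
    · refine ⟨∅, ?_, by simpa⟩
      rw [Set.not_nonempty_iff_eq_empty] at hne
      simp [hne]
  choose g hg1 hg2 using key
  refine ⟨u.biUnion g, ?_, ?_⟩
  · rintro w ⟨hwT, hwF⟩
    obtain ⟨y, hy, hwy⟩ := Set.mem_iUnion₂.mp (hu hwT)
    obtain ⟨v, hv, hwv⟩ := Set.mem_iUnion₂.mp (hg1 y ⟨hwy, hwF⟩)
    exact Set.mem_iUnion₂.mpr ⟨v, Finset.mem_biUnion.mpr ⟨y, hy, hv⟩, hwv⟩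
  · calc ((u.biUnion g).card : ℝ) ≤ ((∑ y ∈ u, (g y).card : ℕ) : ℝ) := by
          exact_mod_cast Finset.card_biUnion_le
      _ = ∑ y ∈ u, ((g y).card : ℝ) := by push_cast; ring
      _ ≤ ∑ _y ∈ u, m := Finset.sum_le_sum (fun y _ => hg2 y)
      _ = u.card * m := by rw [Finset.sum_const, nsmul_eq_mul]

end Comp

section PartTwo
variable {V : Type*} [NormedAddCommGroup V] [NormedSpace ℝ V] [ProperSpace V]
variable {C D : ℝ}

-- abbreviation for the cover hypothesis
def CoverHyp (V : Type*) [NormedAddCommGroup V] [NormedSpace ℝ V] (C D : ℝ) : Prop :=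
  ∀ (x : V) (r R : ℝ), 0 < r → 0 < R →
    ∃ t : Finset V, (closedBall x R ⊆ ⋃ y ∈ t, closedBall y r) ∧
      (t.card : ℝ) ≤ C * (max (R/r) 1) ^ D

lemma rpow_lt_self {R θ : ℝ} (hR : 0 < R) (hR1 : R < 1) (hθ1 : 0 < θ) (hθ2 : θ < 1) :
    R ^ (1/θ) < R := by
  nth_rewrite 2 [← Real.rpow_one R]
  exact Real.rpow_lt_rpow_of_exponent_gt hR hR1 (by rw [lt_div_iff₀ hθ1]; linarith)

lemma D_mem_spectrumSet (hC : 1 ≤ C) (hD : 0 ≤ D) (hcov : CoverHyp V C D)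
    (F : Set V) {θ : ℝ} (hθ1 : 0 < θ) (hθ2 : θ < 1) :
    D ∈ {s : ℝ | 0 ≤ s ∧ ∃ C' > (0 : ℝ), ∀ R : ℝ, 0 < R → R < 1 → ∀ x ∈ F,
      (coveringNumber (R ^ (1 / θ)) (closedBall x R ∩ F) : ℝ≥0∞)
        ≤ ENNReal.ofReal (C' * (R / R ^ (1 / θ)) ^ s)} := by
  refine ⟨hD, C, lt_of_lt_of_le one_pos hC, fun R hR hR1 x hx => ?_⟩
  set r := R ^ (1/θ) with hr
  have hrpos : 0 < r := Real.rpow_pos_of_pos hR _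
  have hrR : r < R := rpow_lt_self hR hR1 hθ1 hθ2
  obtain ⟨t, ht, htc⟩ := hcov x r R hrpos hR
  have hmax : max (R/r) 1 = R/r := max_eq_left (by rw [le_div_iff₀ hrpos]; linarith)
  rw [hmax] at htc
  exact coveringNumber_le_ofReal ((Set.inter_subset_left).trans ht) htc

lemma assouadSpectrum_nonneg (F : Set V) (θ : ℝ) : 0 ≤ assouadSpectrum θ F := by
  apply Real.sInf_nonneg
  rintro x ⟨hx, -⟩
  exact hx

lemma assouadSpectrum_le_D (hC : 1 ≤ C) (hD : 0 ≤ D) (hcov : CoverHyp V C D)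
    (F : Set V) {θ : ℝ} (hθ1 : 0 < θ) (hθ2 : θ < 1) :
    assouadSpectrum θ F ≤ D :=
  csInf_le ⟨0, fun x hx => hx.1⟩ (D_mem_spectrumSet hC hD hcov F hθ1 hθ2)

lemma mem_spectrumSet_of_assouad (hC : 1 ≤ C) (hD : 0 ≤ D) (hcov : CoverHyp V C D)
    {F : Set V} {s C₀ ρ : ℝ} (hs0 : 0 ≤ s) (hC₀ : 0 < C₀) (hρ : 0 < ρ)
    (hA : ∀ r R : ℝ, 0 < r → r < R → R < ρ → ∀ x ∈ F,
      (coveringNumber r (closedBall x R ∩ F) : ℝ≥0∞) ≤ ENNReal.ofReal (C₀ * (R / r) ^ s))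
    {θ : ℝ} (hθ1 : 0 < θ) (hθ2 : θ < 1) :
    s ∈ {s : ℝ | 0 ≤ s ∧ ∃ C' > (0 : ℝ), ∀ R : ℝ, 0 < R → R < 1 → ∀ x ∈ F,
      (coveringNumber (R ^ (1 / θ)) (closedBall x R ∩ F) : ℝ≥0∞)
        ≤ ENNReal.ofReal (C' * (R / R ^ (1 / θ)) ^ s)} := by
  have hterm2 : 0 ≤ C * (8/ρ)^D * C₀ := by positivity
  have hterm3 : 0 ≤ C * (4/ρ)^D := by positivity
  set C' := C₀ + C * (8/ρ)^D * C₀ + C * (4/ρ)^D with hC'def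
  have hC'pos : 0 < C' := by positivity
  refine ⟨hs0, C', hC'pos, fun R hR hR1 x hx => ?_⟩
  set r := R ^ (1/θ) with hrdef
  have hrpos : 0 < r := Real.rpow_pos_of_pos hR _
  have hrR : r < R := rpow_lt_self hR hR1 hθ1 hθ2
  have hRrpos : 0 < R / r := by positivity
  have hRr1 : 1 ≤ R / r := by rw [le_div_iff₀ hrpos]; linarith
  have hpow_nonneg : 0 ≤ (R/r) ^ s := Real.rpow_nonneg hRrpos.le _
  rcases lt_or_ge R ρ with hcase | hcase
  · refine (hA r R hrpos hrR hcase x hx).trans (ENNReal.ofReal_le_ofReal ?_)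
    apply mul_le_mul_of_nonneg_right _ hpow_nonneg
    rw [hC'def]; linarith
  · have hρ1 : ρ < 1 := lt_of_le_of_lt hcase hR1
    rcases lt_or_ge r (ρ/4) with hrc | hrc
    · obtain ⟨u, hu, huc⟩ := hcov x (ρ/8) R (by positivity) hR
      have hucard : (u.card : ℝ) ≤ C * (8/ρ)^D := by
        refine huc.trans ?_
        apply mul_le_mul_of_nonneg_left _ (by linarith : (0:ℝ) ≤ C)
        apply Real.rpow_le_rpow (le_trans zero_le_one (le_max_right _ _)) _ hD
        apply max_le _ (by rw [le_div_iff₀ hρ]; linarith)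
        rw [div_le_div_iff₀ (by positivity) hρ]
        nlinarith
      have hFz : ∀ z ∈ F, ∃ t : Finset V,
          (closedBall z (2*(ρ/8)) ∩ F ⊆ ⋃ w ∈ t, closedBall w r) ∧
          (t.card : ℝ) ≤ C₀ * ((ρ/4)/r) ^ s := by
        intro z hz
        have hbd := hA r (ρ/4) hrpos hrc (by linarith) z hz
        obtain ⟨t, ht, htc⟩ := exists_cover_of_le_ofReal (by positivity) hbd
        refine ⟨t, ?_, htc⟩
        have h28 : 2*(ρ/8) = ρ/4 := by ring
        rw [h28]; exact ht
      obtain ⟨t, ht, htc⟩ := cover_inter_comp (by positivity) hu hFz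
      apply coveringNumber_le_ofReal ht
      calc (t.card : ℝ) ≤ u.card * (C₀ * ((ρ/4)/r)^s) := htc
        _ ≤ (C * (8/ρ)^D) * (C₀ * (R/r)^s) := by
            apply mul_le_mul hucard _ (by positivity) (by positivity)
            apply mul_le_mul_of_nonneg_left _ hC₀.le
            apply Real.rpow_le_rpow (by positivity) _ hs0
            · rw [div_le_div_iff₀ (by positivity) hrpos]; nlinarith
        _ = (C * (8/ρ)^D * C₀) * (R/r)^s := by ring
        _ ≤ C' * (R/r)^s := mul_le_mul_of_nonneg_right (by linarith) hpow_nonneg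
    · obtain ⟨t, ht, htc⟩ := hcov x r R hrpos hR
      apply coveringNumber_le_ofReal ((Set.inter_subset_left).trans ht)
      have hmax : max (R/r) 1 = R/r := max_eq_left hRr1
      rw [hmax] at htc
      calc (t.card : ℝ) ≤ C * (R/r)^D := htc
        _ ≤ C * (4/ρ)^D := by
            apply mul_le_mul_of_nonneg_left _ (by linarith : (0:ℝ) ≤ C)
            apply Real.rpow_le_rpow hRrpos.le _ hD
            rw [div_le_div_iff₀ hrpos hρ]
            nlinarith
        _ ≤ (C * (4/ρ)^D) * (R/r)^s := by
            nth_rewrite 1 [← mul_one (C * (4/ρ)^D)]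
            exact mul_le_mul_of_nonneg_left (Real.one_le_rpow hRr1 hs0) (by positivity)
        _ ≤ C' * (R/r)^s := mul_le_mul_of_nonneg_right (by linarith) hpow_nonneg

lemma genUpperBox_le_assouad (hC : 1 ≤ C) (hD : 0 ≤ D) (hcov : CoverHyp V C D)
    (F : Set V) : genUpperBoxDim F ≤ assouadDim F := by
  have hne : {s : ℝ | 0 ≤ s ∧ ∃ C' > (0 : ℝ), ∃ ρ > (0 : ℝ), ∀ r R : ℝ, 0 < r → r < R → R < ρ →
      ∀ x ∈ F, (coveringNumber r (closedBall x R ∩ F) : ℝ≥0∞)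
        ≤ ENNReal.ofReal (C' * (R / r) ^ s)}.Nonempty := by
    refine ⟨D, hD, C, by linarith, 1, one_pos, fun r R hr hrR hR1 x hx => ?_⟩
    obtain ⟨t, ht, htc⟩ := hcov x r R hr (hr.trans hrR)
    have hmax : max (R/r) 1 = R/r := max_eq_left (by rw [le_div_iff₀ hr]; linarith)
    rw [hmax] at htc
    exact coveringNumber_le_ofReal ((Set.inter_subset_left).trans ht) htc
  apply le_csInf hne
  rintro s ⟨hs0, C₀, hC₀, ρ, hρ, hA⟩
  have hev : ∀ᶠ θ in 𝓝[>] (0:ℝ), assouadSpectrum θ F ≤ s := by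
    filter_upwards [Ioo_mem_nhdsGT_of_mem (by simp : (0:ℝ) ∈ Ico (0:ℝ) 1)] with θ hθ
    exact csInf_le ⟨0, fun x hx => hx.1⟩
      (mem_spectrumSet_of_assouad hC hD hcov hs0 hC₀ hρ hA hθ.1 hθ.2)
  exact Filter.limsup_le_of_le (isCoboundedUnder_le_of_eventually_le _
    (Eventually.of_forall (fun θ => assouadSpectrum_nonneg F θ))) hev

end PartTwo

section PartOne
variable {V : Type*} [NormedAddCommGroup V] [NormedSpace ℝ V] [ProperSpace V]
variable {C D : ℝ}

lemma spectrum_isBoundedUnder (hC : 1 ≤ C) (hD : 0 ≤ D) (hcov : CoverHyp V C D) (F : Set V) :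
    Filter.IsBoundedUnder (· ≤ ·) (𝓝[>] (0:ℝ)) (fun θ => assouadSpectrum θ F) := by
  refine ⟨D, ?_⟩
  rw [Filter.eventually_map]
  filter_upwards [Ioo_mem_nhdsGT_of_mem (by simp : (0:ℝ) ∈ Ico (0:ℝ) 1)] with θ hθ
  exact assouadSpectrum_le_D hC hD hcov F hθ.1 hθ.2

lemma genUpperBoxDim_nonneg (hC : 1 ≤ C) (hD : 0 ≤ D) (hcov : CoverHyp V C D) (F : Set V) :
    0 ≤ genUpperBoxDim F :=
  Filter.le_limsup_of_frequently_le
    ((Filter.Eventually.of_forall (fun θ => assouadSpectrum_nonneg F θ)).frequently)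
    (spectrum_isBoundedUnder hC hD hcov F)

lemma boxcount_of_spectrum (hC : 1 ≤ C) (hD : 0 ≤ D) (hcov : CoverHyp V C D)
    {F : Set V} {θ s C₀ : ℝ} (hθ1 : 0 < θ) (hθ2 : θ < 1) (hs0 : 0 ≤ s) (hC₀ : 0 < C₀)
    (hS : ∀ R : ℝ, 0 < R → R < 1 → ∀ x ∈ F,
      (coveringNumber (R ^ (1 / θ)) (closedBall x R ∩ F) : ℝ≥0∞)
        ≤ ENNReal.ofReal (C₀ * (R / R ^ (1 / θ)) ^ s))
    {M : ℝ} (hM : 1 ≤ M) (x₀ : V) {ε : ℝ} (hε0 : 0 < ε) (hε1 : ε < 1) :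
    ∃ t : Finset V, (closedBall x₀ M ∩ F ⊆ ⋃ w ∈ t, closedBall w ε) ∧
      (t.card : ℝ) ≤ (C * C₀ * (2*M) ^ D) * ε ^ (-(θ*D + s)) := by
  set R := ε ^ θ with hRdef
  have hR0 : 0 < R := Real.rpow_pos_of_pos hε0 _
  have hR1 : R < 1 := Real.rpow_lt_one hε0.le hε1 hθ1
  have hRε : R ^ (1/θ) = ε := by
    rw [hRdef, ← Real.rpow_mul hε0.le, mul_one_div_cancel hθ1.ne', Real.rpow_one]
  have hM0 : (0:ℝ) < M := lt_of_lt_of_le one_pos hM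
  obtain ⟨u, hu, huc⟩ := hcov x₀ (R/2) M (by positivity) hM0
  have hucard : (u.card : ℝ) ≤ C * (2*M/R) ^ D := by
    refine huc.trans ?_
    apply mul_le_mul_of_nonneg_left _ (by linarith : (0:ℝ) ≤ C)
    have hmax : max (M/(R/2)) 1 = M/(R/2) := max_eq_left (by
      rw [le_div_iff₀ (by positivity)]; linarith)
    rw [hmax]
    have : M/(R/2) = 2*M/R := by field_simp
    rw [this]
  have hFz : ∀ z ∈ F, ∃ t : Finset V,
      (closedBall z (2*(R/2)) ∩ F ⊆ ⋃ w ∈ t, closedBall w ε) ∧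
      (t.card : ℝ) ≤ C₀ * (R/ε) ^ s := by
    intro z hz
    have hbd := hS R hR0 hR1 z hz
    rw [hRε] at hbd
    obtain ⟨t, ht, htc⟩ := exists_cover_of_le_ofReal (by positivity) hbd
    refine ⟨t, ?_, htc⟩
    have h22 : 2*(R/2) = R := by ring
    rw [h22]; exact ht
  obtain ⟨t, ht, htc⟩ := cover_inter_comp (by positivity) hu hFz
  refine ⟨t, ht, ?_⟩
  have e1 : (2*M/R) ^ D = (2*M)^D / ε ^ (θ*D) := by
    rw [Real.div_rpow (by linarith : (0:ℝ) ≤ 2*M) hR0.le, hRdef, ← Real.rpow_mul hε0.le]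
  have e2 : (R/ε) ^ s = ε ^ (θ*s) / ε ^ s := by
    rw [Real.div_rpow hR0.le hε0.le, hRdef, ← Real.rpow_mul hε0.le]
  have e3 : (2*M/R) ^ D * (R/ε) ^ s = (2*M)^D * ε ^ (θ*s - (θ*D + s)) := by
    rw [e1, e2, div_mul_div_comm, ← Real.rpow_add hε0, mul_div_assoc, ← Real.rpow_sub hε0]
  calc (t.card : ℝ) ≤ (u.card : ℝ) * (C₀ * (R/ε)^s) := htc
    _ ≤ (C * (2*M/R)^D) * (C₀ * (R/ε)^s) := by
        apply mul_le_mul_of_nonneg_right hucard (by positivity)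
    _ = (C * C₀) * ((2*M/R)^D * (R/ε)^s) := by ring
    _ = (C * C₀ * (2*M)^D) * ε ^ (θ*s - (θ*D+s)) := by rw [e3]; ring
    _ ≤ (C * C₀ * (2*M)^D) * ε ^ (-(θ*D + s)) := by
        apply mul_le_mul_of_nonneg_left _ (by positivity)
        apply Real.rpow_le_rpow_of_exponent_ge hε0 hε1.le
        nlinarith [mul_nonneg hθ1.le hs0]

lemma two_rpow_pos (a : ℝ) : (0:ℝ) < (2:ℝ) ^ a := Real.rpow_pos_of_pos two_pos _

lemma two_rpow_anti {a b : ℝ} (h : a ≤ b) : (2:ℝ) ^ a ≤ (2:ℝ) ^ b :=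
  Real.rpow_le_rpow_of_exponent_le one_le_two h

lemma packingPre_zero {G : Set V} {A texp s' : ℝ} (hA : 0 < A) (ht0 : 0 ≤ texp) (hts : texp < s')
    (hbox : ∀ ε : ℝ, 0 < ε → ε < 1 → ∃ t : Finset V, (G ⊆ ⋃ w ∈ t, closedBall w ε) ∧
      (t.card : ℝ) ≤ A * ε ^ (-texp)) :
    packingPre₀ s' G = 0 := by
  classical
  have hs'0 : 0 < s' := lt_of_le_of_lt ht0 hts
  set q : ℝ := (2:ℝ) ^ (-(s' - texp)) with hqdef
  have hq0 : 0 < q := two_rpow_pos _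
  have hq1 : q < 1 := Real.rpow_lt_one_of_one_lt_of_neg one_lt_two (by linarith)
  set qe : ℝ≥0∞ := ENNReal.ofReal q with hqedef
  have hqe1 : qe < 1 := ENNReal.ofReal_lt_one.mpr hq1
  set c0 : ℝ≥0∞ := ENNReal.ofReal (A * (2:ℝ) ^ (texp + s')) with hc0def
  set cA : ℝ≥0∞ := c0 * (1 - qe)⁻¹ with hcAdef
  have hcA_ne : cA ≠ ⊤ := by
    apply ENNReal.mul_ne_top ENNReal.ofReal_ne_top
    rw [Ne, ENNReal.inv_eq_top]
    exact (tsub_pos_of_lt hqe1).ne'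
  -- covers at each dyadic scale
  have hcover : ∀ k : ℕ, ∃ t : Finset V, (G ⊆ ⋃ w ∈ t, closedBall w ((2:ℝ)^(-(k:ℝ)-1))) ∧
      (t.card : ℝ) ≤ A * ((2:ℝ)^(-(k:ℝ)-1)) ^ (-texp) := by
    intro k
    apply hbox _ (two_rpow_pos _)
    apply Real.rpow_lt_one_of_one_lt_of_neg one_lt_two
    have : (0:ℝ) ≤ (k:ℝ) := Nat.cast_nonneg k
    linarith
  choose tk htk htkc using hcover
  -- main dyadic estimate
  have main : ∀ K : ℕ, packingPre s' ((2:ℝ)^(-(K:ℝ)-1)) G ≤ cA * qe ^ (K+1) := by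
    intro K
    set δ : ℝ := (2:ℝ)^(-(K:ℝ)-1) with hδdef
    refine iSup_le fun Dset => iSup_le fun hcnt => iSup_le fun hmem => iSup_le fun hdisj => ?_
    -- dyadic index of each ball
    have hex : ∀ p : Dset, ∃ m : ℕ, (2:ℝ) ^ (-(m:ℝ)-1) < (p:V×ℝ).2 := by
      intro p
      obtain ⟨-, hp2, -⟩ := hmem _ p.2
      obtain ⟨n, hn⟩ := exists_pow_lt_of_lt_one hp2 (by norm_num : (1:ℝ)/2 < 1)
      refine ⟨n, lt_of_le_of_lt ?_ hn⟩
      have h1 : ((1:ℝ)/2) ^ n = (2:ℝ) ^ (-(n:ℝ)) := by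
        rw [Real.rpow_neg two_pos.le, Real.rpow_natCast, one_div, inv_pow]
      rw [h1]
      exact two_rpow_anti (by linarith)
    set kf : Dset → ℕ := fun p => Nat.find (hex p) with hkfdef
    have hkf : ∀ p : Dset, (2:ℝ) ^ (-(kf p:ℝ)-1) < (p:V×ℝ).2 := fun p => Nat.find_spec (hex p)
    -- each radius is at most 2^(-kf p)
    have hk_up : ∀ p : Dset, (p:V×ℝ).2 ≤ (2:ℝ) ^ (-(kf p:ℝ)) := by
      intro p
      obtain ⟨-, hp2, hp3⟩ := hmem _ p.2
      by_contra hcon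
      push_neg at hcon
      rcases Nat.eq_zero_or_pos (kf p) with h0 | h1
      · rw [h0] at hcon
        simp only [Nat.cast_zero, neg_zero, Real.rpow_zero] at hcon
        have hδ1 : δ ≤ 1 := by
          rw [hδdef]
          calc (2:ℝ)^(-(K:ℝ)-1) ≤ (2:ℝ)^(0:ℝ) := two_rpow_anti (by
                have : (0:ℝ) ≤ (K:ℝ) := Nat.cast_nonneg K
                linarith)
            _ = 1 := Real.rpow_zero 2
        linarith
      · have hmin := Nat.find_min (hex p) (show kf p - 1 < Nat.find (hex p) from by
          have : Nat.find (hex p) = kf p := rfl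
          omega)
        push_neg at hmin
        have hcast : (((kf p - 1 : ℕ)):ℝ) = (kf p : ℝ) - 1 := by
          push_cast [Nat.cast_sub h1]
          ring
        rw [hcast] at hmin
        have : -((kf p:ℝ) - 1) - 1 = -(kf p:ℝ) := by ring
        rw [this] at hmin
        linarith
    -- kf p ≥ K+1
    have hk_lo : ∀ p : Dset, K + 1 ≤ kf p := by
      intro p
      obtain ⟨-, hp2, hp3⟩ := hmem _ p.2
      have h1 : (2:ℝ) ^ (-(kf p:ℝ)-1) < (2:ℝ)^(-(K:ℝ)-1) := lt_of_lt_of_le (hkf p) hp3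
      have h2 : -(kf p:ℝ)-1 < -(K:ℝ)-1 := by
        by_contra hcon
        push_neg at hcon
        exact absurd (two_rpow_anti hcon) (not_le.mpr h1)
      have : (K:ℝ) < (kf p:ℝ) := by linarith
      exact_mod_cast Nat.succ_le_of_lt (by exact_mod_cast this)
    -- assignment to cover centres
    have hassign : ∀ p : Dset, ∃ w, w ∈ tk (kf p) ∧
        (p:V×ℝ).1 ∈ closedBall w ((2:ℝ)^(-(kf p:ℝ)-1)) := by
      intro p
      obtain ⟨hp1, -, -⟩ := hmem _ p.2
      have := htk (kf p) hp1
      obtain ⟨w, hw, hpw⟩ := Set.mem_iUnion₂.mp this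
      exact ⟨w, hw, hpw⟩
    choose wf hwf1 hwf2 using hassign
    -- bound the tsum via finite subsums
    rw [ENNReal.tsum_eq_iSup_sum]
    refine iSup_le fun sfin => ?_
    have hgroup := Finset.sum_fiberwise_of_maps_to
      (g := fun p : Dset => kf p) (t := sfin.image fun p => kf p)
      (fun x hx => Finset.mem_image_of_mem _ hx)
      (fun p => ENNReal.ofReal ((2 * (p:V×ℝ).2) ^ s'))
    rw [← hgroup]
    -- bound each fiber
    have hfiber : ∀ k ∈ sfin.image (fun p : Dset => kf p),
        (∑ p ∈ sfin.filter (fun p => kf p = k), ENNReal.ofReal ((2 * (p:V×ℝ).2) ^ s'))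
          ≤ c0 * qe ^ k := by
      intro k hk
      -- card of fiber
      have hcard : ((sfin.filter (fun p => kf p = k)).card : ℝ) ≤ A * ((2:ℝ)^(-(k:ℝ)-1)) ^ (-texp) := by
        refine le_trans ?_ (htkc k)
        have hinj : Set.InjOn (fun p : Dset => wf p) (sfin.filter (fun p => kf p = k)) := by
          intro p hp p' hp' hww
          simp only [Finset.coe_filter, Set.mem_setOf_eq] at hp hp'
          by_contra hne
          have hne' : (p:V×ℝ) ≠ (p':V×ℝ) := fun h => hne (Subtype.coe_injective h)
          have hdisj' := hdisj p.2 p'.2 hne'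
          obtain ⟨-, hr, -⟩ := hmem _ p.2
          obtain ⟨-, hr', -⟩ := hmem _ p'.2
          have hsep := (disjoint_closedBall_closedBall_iff hr.le hr'.le).mp hdisj'
          have hd1 : dist (p:V×ℝ).1 (p':V×ℝ).1 ≤ (2:ℝ)^(-(k:ℝ)-1) + (2:ℝ)^(-(k:ℝ)-1) := by
            have hww' : wf p = wf p' := hww
            calc dist (p:V×ℝ).1 (p':V×ℝ).1
                ≤ dist (p:V×ℝ).1 (wf p) + dist (wf p) (p':V×ℝ).1 := dist_triangle _ _ _
              _ ≤ (2:ℝ)^(-(kf p:ℝ)-1) + (2:ℝ)^(-(kf p':ℝ)-1) := by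
                  have h1 := hwf2 p
                  have h2 := hwf2 p'
                  rw [mem_closedBall] at h1 h2
                  refine add_le_add h1 ?_
                  rw [hww', dist_comm]
                  exact h2
              _ = (2:ℝ)^(-(k:ℝ)-1) + (2:ℝ)^(-(k:ℝ)-1) := by rw [hp.2, hp'.2]
          have hsum : (2:ℝ)^(-(k:ℝ)-1) + (2:ℝ)^(-(k:ℝ)-1) < (p:V×ℝ).2 + (p':V×ℝ).2 := by
            have a1 := hkf p
            have a2 := hkf p'
            rw [hp.2] at a1
            rw [hp'.2] at a2
            linarith
          linarith
        have hmaps : ∀ p ∈ sfin.filter (fun p : Dset => kf p = k), wf p ∈ tk k := by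
          intro p hp
          have := hwf1 p
          rw [(Finset.mem_filter.mp hp).2] at this
          exact this
        have := Finset.card_le_card_of_injOn (fun p => wf p) hmaps hinj
        exact_mod_cast this
      -- termwise bound and sum
      have hterm : ∀ p ∈ sfin.filter (fun p : Dset => kf p = k),
          ENNReal.ofReal ((2 * (p:V×ℝ).2) ^ s')
            ≤ ENNReal.ofReal ((2 * (2:ℝ)^(-(k:ℝ))) ^ s') := by
        intro p hp
        apply ENNReal.ofReal_le_ofReal
        apply Real.rpow_le_rpow (by
          obtain ⟨-, hr, -⟩ := hmem _ p.2
          linarith) _ hs'0.le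
        have hup := hk_up p
        rw [(Finset.mem_filter.mp hp).2] at hup
        linarith
      calc (∑ p ∈ sfin.filter (fun p : Dset => kf p = k), ENNReal.ofReal ((2 * (p:V×ℝ).2) ^ s'))
          ≤ ∑ _p ∈ sfin.filter (fun p : Dset => kf p = k),
              ENNReal.ofReal ((2 * (2:ℝ)^(-(k:ℝ))) ^ s') := Finset.sum_le_sum hterm
        _ = ((sfin.filter (fun p : Dset => kf p = k)).card : ℝ≥0∞)
              * ENNReal.ofReal ((2 * (2:ℝ)^(-(k:ℝ))) ^ s') := by
            rw [Finset.sum_const, nsmul_eq_mul]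
        _ ≤ ENNReal.ofReal (A * ((2:ℝ)^(-(k:ℝ)-1)) ^ (-texp))
              * ENNReal.ofReal ((2 * (2:ℝ)^(-(k:ℝ))) ^ s') := by
            apply mul_le_mul_left ?_ _
            rw [← ENNReal.ofReal_natCast]
            exact ENNReal.ofReal_le_ofReal hcard
        _ = ENNReal.ofReal ((A * ((2:ℝ)^(-(k:ℝ)-1)) ^ (-texp)) * ((2 * (2:ℝ)^(-(k:ℝ))) ^ s')) := by
            rw [← ENNReal.ofReal_mul (by positivity)]
        _ ≤ c0 * qe ^ k := by
            rw [hc0def, hqedef, ← ENNReal.ofReal_pow hq0.le, ← ENNReal.ofReal_mul (by positivity)]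
            apply ENNReal.ofReal_le_ofReal
            have l1 : ((2:ℝ)^(-(k:ℝ)-1)) ^ (-texp) = (2:ℝ) ^ ((-(k:ℝ)-1)*(-texp)) :=
              (Real.rpow_mul two_pos.le _ _).symm
            have l2 : (2 * (2:ℝ)^(-(k:ℝ))) = (2:ℝ) ^ (1 + -(k:ℝ)) := by
              rw [Real.rpow_add two_pos, Real.rpow_one]
            have l3 : ((2:ℝ) ^ (1 + -(k:ℝ))) ^ s' = (2:ℝ) ^ ((1 + -(k:ℝ))*s') :=
              (Real.rpow_mul two_pos.le _ _).symm
            have l4 : q ^ k = (2:ℝ) ^ (-(s'-texp) * (k:ℝ)) := by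
              rw [hqdef, ← Real.rpow_natCast ((2:ℝ)^(-(s'-texp))) k, ← Real.rpow_mul two_pos.le]
            rw [l1, l2, l3, l4, mul_assoc, mul_assoc, ← Real.rpow_add two_pos,
              ← Real.rpow_add two_pos]
            apply mul_le_mul_of_nonneg_left _ hA.le
            apply le_of_eq
            congr 1
            ring
    -- sum the fibers
    calc (∑ k ∈ sfin.image (fun p : Dset => kf p),
            ∑ p ∈ sfin.filter (fun p : Dset => kf p = k), ENNReal.ofReal ((2 * (p:V×ℝ).2) ^ s'))
        ≤ ∑ k ∈ sfin.image (fun p : Dset => kf p), c0 * qe ^ k := Finset.sum_le_sum hfiber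
      _ = c0 * ∑ k ∈ sfin.image (fun p : Dset => kf p), qe ^ k := by rw [Finset.mul_sum]
      _ ≤ c0 * (qe^(K+1) * (1-qe)⁻¹) := by
          apply mul_le_mul_right ?_ _
          have himg : ∀ k ∈ sfin.image (fun p : Dset => kf p), K+1 ≤ k := by
            intro k hk
            obtain ⟨p, -, rfl⟩ := Finset.mem_image.mp hk
            exact hk_lo p
          have hsplit : ∀ k ∈ sfin.image (fun p : Dset => kf p),
              qe ^ k = qe^(K+1) * qe^(k-(K+1)) := by
            intro k hk
            rw [← pow_add]
            congr 1
            have := himg k hk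
            omega
          rw [Finset.sum_congr rfl hsplit, ← Finset.mul_sum]
          apply mul_le_mul_right ?_ _
          rw [← ENNReal.tsum_geometric qe]
          have hinj2 : ∀ a ∈ sfin.image (fun p : Dset => kf p),
              ∀ b ∈ sfin.image (fun p : Dset => kf p), a - (K+1) = b - (K+1) → a = b := by
            intro a ha b hb hab
            have h1 := himg a ha
            have h2 := himg b hb
            omega
          rw [← Finset.sum_image hinj2]
          exact ENNReal.sum_le_tsum _
      _ = cA * qe^(K+1) := by rw [hcAdef]; ring
  -- conclude
  have final : ∀ K : ℕ, packingPre₀ s' G ≤ cA * qe ^ (K+1) := by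
    intro K
    refine le_trans ?_ (main K)
    exact iInf₂_le _ (two_rpow_pos _)
  have htend : Filter.Tendsto (fun K : ℕ => cA * qe ^ (K+1)) Filter.atTop (𝓝 0) := by
    have h0 : Filter.Tendsto (fun K : ℕ => qe ^ K) Filter.atTop (𝓝 0) :=
      ENNReal.tendsto_pow_atTop_nhds_zero_of_lt_one hqe1
    have h1 := h0.comp (Filter.tendsto_add_atTop_nat 1)
    have h2 := ENNReal.Tendsto.const_mul (a := cA) h1 (Or.inr hcA_ne)
    simpa using h2
  have hle : packingPre₀ s' G ≤ 0 := ge_of_tendsto htend (Filter.Eventually.of_forall final)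
  exact le_antisymm hle zero_le

lemma packingDim_le_genUpperBox (hC : 1 ≤ C) (hD : 0 ≤ D) (hcov : CoverHyp V C D) (F : Set V) :
    packingDim F ≤ genUpperBoxDim F := by
  have hg0 := genUpperBoxDim_nonneg hC hD hcov F
  refine le_of_forall_gt_imp_ge_of_dense fun s' hs' => ?_
  apply csInf_le ⟨0, fun x hx => hx.1⟩
  refine ⟨by linarith, ?_⟩
  set s'' := (genUpperBoxDim F + s')/2 with hs''def
  have hgs'' : genUpperBoxDim F < s'' := by rw [hs''def]; linarith
  have hs''s' : s'' < s' := by rw [hs''def]; linarith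
  have hev := Filter.eventually_lt_of_limsup_lt hgs'' (spectrum_isBoundedUnder hC hD hcov F)
  have hm : (0:ℝ) < min 1 ((s' - s'')/(D+1)) :=
    lt_min one_pos (div_pos (by linarith) (by linarith))
  have hIoo : ∀ᶠ θ in 𝓝[>] (0:ℝ), θ ∈ Ioo (0:ℝ) (min 1 ((s' - s'')/(D+1))) :=
    eventually_of_mem (Ioo_mem_nhdsGT_of_mem ⟨le_refl 0, hm⟩) fun x hx => hx
  obtain ⟨θ, hθlt, hθIoo⟩ := (hev.and hIoo).exists
  have hθ1 : 0 < θ := hθIoo.1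
  have hθ2 : θ < 1 := lt_of_lt_of_le hθIoo.2 (min_le_left _ _)
  have hθ3 : θ * (D+1) < s' - s'' := by
    have h4 := lt_of_lt_of_le hθIoo.2 (min_le_right _ _)
    rw [lt_div_iff₀ (by linarith : (0:ℝ) < D+1)] at h4
    exact h4
  have hne : {s : ℝ | 0 ≤ s ∧ ∃ C' > (0:ℝ), ∀ R : ℝ, 0 < R → R < 1 → ∀ x ∈ F,
      (coveringNumber (R ^ (1 / θ)) (closedBall x R ∩ F) : ℝ≥0∞)
        ≤ ENNReal.ofReal (C' * (R / R ^ (1 / θ)) ^ s)}.Nonempty :=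
    ⟨D, D_mem_spectrumSet hC hD hcov F hθ1 hθ2⟩
  obtain ⟨s, hsmem, hss⟩ := exists_lt_of_csInf_lt hne hθlt
  obtain ⟨hs0, C₀, hC₀, hS⟩ := hsmem
  have htexp : θ*D + s < s' := by nlinarith
  have htexp0 : 0 ≤ θ*D + s := add_nonneg (mul_nonneg hθ1.le hD) hs0
  have hzero : ∀ i : ℕ, packingPre₀ s' (closedBall (0:V) ((i:ℝ)+1) ∩ F) = 0 := by
    intro i
    have hi0 : (0:ℝ) ≤ (i:ℝ) := Nat.cast_nonneg i
    have hM : (1:ℝ) ≤ (i:ℝ)+1 := by linarith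
    apply packingPre_zero (A := C*C₀*(2*((i:ℝ)+1))^D) (by positivity) htexp0 htexp
    intro ε hε0 hε1
    obtain ⟨t, ht, htc⟩ := boxcount_of_spectrum hC hD hcov hθ1 hθ2 hs0 hC₀ hS hM (0:V) hε0 hε1
    exact ⟨t, ht, htc⟩
  have hcover : F ⊆ ⋃ i : ℕ, (closedBall (0:V) ((i:ℝ)+1) ∩ F) := by
    intro x hx
    obtain ⟨i, hi⟩ := exists_nat_ge ‖x‖
    refine Set.mem_iUnion.mpr ⟨i, ⟨?_, hx⟩⟩
    rw [mem_closedBall, dist_zero_right]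
    linarith
  have hle : packingMeasure s' F ≤ 0 := by
    calc packingMeasure s' F
        ≤ ∑' i : ℕ, packingPre₀ s' (closedBall (0:V) ((i:ℝ)+1) ∩ F) :=
        iInf₂_le (fun i : ℕ => closedBall (0:V) ((i:ℝ)+1) ∩ F) hcover
      _ = 0 := by simp [hzero]
  exact le_antisymm hle zero_le


end PartOne



/-- For every `F ⊆ ℝ^d`, `dim_P F ≤ \overline{dim}_{GB} F ≤ dim_A F`. -/
theorem packingDim_le_genUpperBoxDim_le_assouadDim
    (d : ℕ) (F : Set (EuclideanSpace ℝ (Fin d))) :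
    packingDim F ≤ genUpperBoxDim F ∧ genUpperBoxDim F ≤ assouadDim F := by
  obtain ⟨C, D, hC, hD, hcov⟩ := exists_cover_const (V := EuclideanSpace ℝ (Fin d))
  exact ⟨packingDim_le_genUpperBox hC hD hcov F, genUpperBox_le_assouad hC hD hcov F⟩

end
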